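/- Let α_n → ∞ and let (φ_n) be a bounded sequence in L²(ℝ₊ × S^{2N−1}). Suppose η(φ_n) > 0, where η is defined via weak limits of e^{i x_n·e^{α_n t}ω} φ_n(t,ω). Then, after extraction, there exist Φ⁽¹⁾ ∈ L²(ℝ₊ × S^{2N−1}) with ‖Φ⁽¹⁾‖²_{L²} ≥ η(φ_n)/2 and a sequence (x_n⁽¹⁾) ⊂ ℝ^{2N} such that φ_n(t,ω) = e^{−i x_n⁽¹⁾·e^{α_n t}ω} Φ⁽¹⁾(t,ω) + r_n⁽¹⁾(t,ω) with e^{i x_n⁽¹⁾·e^{α_n t}ω} r_n⁽¹⁾(t,ω) ⇀ 0 weakly in L²(ℝ₊ × S^{2N−1}); consequently ‖φ_n‖²_{L²} = ‖Φ⁽¹⁾‖²_{L²} + ‖r_n⁽¹⁾‖²_{L²} + o(1). -/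

import Mathlib

open MeasureTheory Filter Metric Complex
open scoped ENNReal Topology NNReal ComplexConjugate

noncomputable section

/-- `ℝ^{2N}`. -/
abbrev Esp (N : ℕ) := EuclideanSpace ℝ (Fin (2*N))

/-- the unit sphere `S^{2N-1}`. -/
abbrev sphereM (N : ℕ) := Metric.sphere (0 : Esp N) 1

/-- surface measure on the unit sphere. -/
def sphMeas (N : ℕ) : Measure (sphereM N) := (volume : Measure (Esp N)).toSphere

/-- measure on `ℝ₊ × S^{2N-1}`. -/
def muP (N : ℕ) : Measure (ℝ × sphereM N) :=
  ((volume : Measure ℝ).restrict (Set.Ioi 0)).prod (sphMeas N)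

/-- Fourier transform `û(ξ) = ∫ e^{-ix·ξ} u(x) dx`. -/
def fint {N : ℕ} (u : Esp N → ℂ) (ξ : Esp N) : ℂ :=
  ∫ x : Esp N, Complex.exp (-Complex.I * ((inner ℝ x ξ : ℝ) : ℂ)) * u x

/-- inverse Fourier transform `(2π)^{-2N} ∫ e^{ix·ξ} F(ξ) dξ`. -/
def invFint (N : ℕ) (F : Esp N → ℂ) (x : Esp N) : ℂ :=
  ((((2*Real.pi)^(2*N))⁻¹ : ℝ) : ℂ) *
    ∫ ξ : Esp N, Complex.exp (Complex.I * ((inner ℝ x ξ : ℝ) : ℂ)) * F ξ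

/-- squared nonhomogeneous Sobolev `H^N` norm `∫ (1+|ξ|²)^N |û(ξ)|² dξ`. -/
def sobNormSq (N : ℕ) (u : Esp N → ℂ) : ℝ :=
  ∫ ξ : Esp N, (1 + ‖ξ‖^2)^N * ‖fint u ξ‖^2

/-- `ω_{2N-1} = 2π^N/(N-1)!`, the surface measure of `S^{2N-1}`. -/
def omegaS (N : ℕ) : ℝ := 2 * Real.pi ^ N / (N-1).factorial

/-- `β_N = 2N π^{2N} 2^{2N} / ω_{2N-1}`. -/
def betaN (N : ℕ) : ℝ := 2 * N * Real.pi ^ (2*N) * 2 ^ (2*N) / omegaS N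

/-- `C_N = (2π)^{-N} ω_{2N-1}^{-1/2}`. -/
def CN (N : ℕ) : ℝ := ((2*Real.pi)^N)⁻¹ * (Real.sqrt (omegaS N))⁻¹

/-- `C̃_N = ω_{2N-1}^{1/2} (2π)^{-N}`. -/
def CtN (N : ℕ) : ℝ := Real.sqrt (omegaS N) * ((2*Real.pi)^N)⁻¹

/-- Luxemburg norm of the Orlicz space associated to `φ(s) = e^{s²}-1`. -/
def orliczNorm {d : ℕ} (u : EuclideanSpace ℝ (Fin d) → ℂ) : ℝ :=
  sInf {l : ℝ | 0 < l ∧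
    (∫⁻ x, ENNReal.ofReal (Real.exp ((‖u x‖ / l)^2) - 1)) ≤ 1}

/-- the `𝓑` norm: `sup_j (∫_S ∫_{2^j}^{2^{j+1}} |w(t,ω)|² dt dω)^{1/2}`. -/
def Bnorm (N : ℕ) (w : ℝ → Esp N → ℂ) : ℝ :=
  ⨆ j : ℤ, Real.sqrt (∫ ω : sphereM N,
    (∫ t in Set.Icc ((2:ℝ)^j) ((2:ℝ)^(j+1)), ‖w t (ω : Esp N)‖^2) ∂(sphMeas N))

/-- the modulation `e^{i x · e^{a t} ω}`. -/
def modPhase (N : ℕ) (x : Esp N) (a t : ℝ) (ω : sphereM N) : ℂ :=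
  Complex.exp (Complex.I * ((inner ℝ x (Real.exp (a * t) • (ω : Esp N)) : ℝ) : ℂ))

/-- the set `𝒫(r_n)` of weak `L²` limits of modulated subsequences. -/
def weakLimSet (N : ℕ) (α : ℕ → ℝ) (r : ℕ → ℝ → Esp N → ℂ) :
    Set (ℝ × sphereM N → ℂ) :=
  {H | MemLp H 2 (muP N) ∧ ∃ (x : ℕ → Esp N) (σ : ℕ → ℕ), StrictMono σ ∧
    ∀ g : ℝ × sphereM N → ℂ, MemLp g 2 (muP N) →
      Tendsto (fun k => ∫ p, modPhase N (x k) (α (σ k)) p.1 p.2 *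
          r (σ k) p.1 (p.2 : Esp N) * conj (g p) ∂(muP N))
        atTop (𝓝 (∫ p, H p * conj (g p) ∂(muP N)))}

/-- `η(r_n) = sup_{H ∈ 𝒫(r_n)} ‖H‖²_{L²}`. -/
def etaFn (N : ℕ) (α : ℕ → ℝ) (r : ℕ → ℝ → Esp N → ℂ) : ℝ :=
  sSup {c | ∃ H ∈ weakLimSet N α r, c = (eLpNorm H 2 (muP N)).toReal ^ 2}
section Helpers
variable {γ : Type*} [MeasurableSpace γ] {ν : Measure γ}

lemma eLpNorm_two_eq (f : γ → ℂ) :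
    eLpNorm f 2 ν = (∫⁻ x, ((‖f x‖₊ : ℝ≥0∞))^2 ∂ν) ^ (1/2 : ℝ) := by
  rw [eLpNorm_eq_lintegral_rpow_enorm_toReal two_ne_zero ENNReal.ofNat_ne_top]
  simp only [ENNReal.toReal_ofNat]
  congr 1
  exact lintegral_congr fun x => by rw [← ENNReal.rpow_natCast, enorm_eq_nnnorm]; norm_num

lemma lint_ne_top_iff {f : γ → ℂ} :
    eLpNorm f 2 ν < ⊤ ↔ (∫⁻ x, ((‖f x‖₊ : ℝ≥0∞))^2 ∂ν) ≠ ⊤ := by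
  rw [eLpNorm_two_eq]
  constructor
  · intro h hc
    rw [hc] at h
    simp [ENNReal.top_rpow_of_pos] at h
  · intro h
    exact ENNReal.rpow_lt_top_of_nonneg (by norm_num) h

lemma sq_toReal_eLpNorm_two {f : γ → ℂ} (h : (∫⁻ x, ((‖f x‖₊ : ℝ≥0∞))^2 ∂ν) ≠ ⊤) :
    (eLpNorm f 2 ν).toReal ^ 2 = (∫⁻ x, ((‖f x‖₊ : ℝ≥0∞))^2 ∂ν).toReal := by
  rw [eLpNorm_two_eq, ← ENNReal.toReal_rpow, ← Real.rpow_natCast _ 2, ← Real.rpow_mul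
    ENNReal.toReal_nonneg]
  norm_num

lemma memℒp_two_of {f : γ → ℂ} (hm : AEStronglyMeasurable f ν)
    (h : (∫⁻ x, ((‖f x‖₊ : ℝ≥0∞))^2 ∂ν) ≠ ⊤) : MemLp f 2 ν :=
  ⟨hm, lint_ne_top_iff.mpr h⟩

lemma integral_normsq {f : γ → ℂ} (hf : MemLp f 2 ν) :
    ∫ x, ‖f x‖^2 ∂ν = (∫⁻ x, ((‖f x‖₊ : ℝ≥0∞))^2 ∂ν).toReal := by
  rw [integral_eq_lintegral_of_nonneg_ae (ae_of_all _ fun x => sq_nonneg _)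
    ((hf.1.norm.aemeasurable.pow_const 2).aestronglyMeasurable)]
  congr 1
  refine lintegral_congr fun x => ?_
  rw [ENNReal.ofReal_pow (norm_nonneg _), ofReal_norm, enorm_eq_nnnorm]

lemma integrable_normsq {f : γ → ℂ} (hf : MemLp f 2 ν) :
    Integrable (fun x => ‖f x‖^2) ν := by
  have := hf.integrable_norm_rpow two_ne_zero ENNReal.ofNat_ne_top
  simp only [ENNReal.toReal_ofNat] at this
  refine this.congr (ae_of_all _ fun x => ?_)
  show ‖f x‖ ^ (2:ℝ) = ‖f x‖ ^ (2:ℕ)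
  rw [← Real.rpow_natCast ‖f x‖ 2]
  norm_num

lemma hilbert_exp {f h : γ → ℂ} (hf : MemLp f 2 ν) (hh : MemLp h 2 ν)
    (hint : Integrable (fun x => f x * conj (h x)) ν) :
    (∫⁻ x, ((‖f x - h x‖₊ : ℝ≥0∞))^2 ∂ν).toReal
      = (∫⁻ x, ((‖f x‖₊ : ℝ≥0∞))^2 ∂ν).toReal + (∫⁻ x, ((‖h x‖₊ : ℝ≥0∞))^2 ∂ν).toReal
        - 2 * (∫ x, f x * conj (h x) ∂ν).re := by
  have hsub : MemLp (fun x => f x - h x) 2 ν := hf.sub hh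
  have hre : Integrable (fun x => (f x * conj (h x)).re) ν := hint.re
  have hpt : ∀ x, ‖f x - h x‖^2 = ‖f x‖^2 + ‖h x‖^2 - 2 * (f x * conj (h x)).re := by
    intro x
    have := Complex.normSq_sub (f x) (h x)
    simpa [← Complex.sq_norm] using this
  have hi : ∫ x, (f x * conj (h x)).re ∂ν = (∫ x, f x * conj (h x) ∂ν).re := by
    simpa using integral_re hint
  rw [← integral_normsq hsub, ← integral_normsq hf, ← integral_normsq hh, ← hi]
  have h12 : Integrable (fun x => ‖f x‖^2 + ‖h x‖^2) ν :=
    (integrable_normsq hf).add (integrable_normsq hh)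
  rw [integral_congr_ae (μ := ν) (ae_of_all _ hpt),
    integral_sub h12 (hre.const_mul 2),
    integral_add (integrable_normsq hf) (integrable_normsq hh), integral_const_mul]

lemma ennreal_mul_le_sq_add (a b : ℝ≥0∞) : a * b ≤ a^2 + b^2 := by
  rcases le_total a b with h | h
  · calc a * b ≤ b * b := mul_le_mul_left h b
    _ = b ^ 2 := (sq b).symm
    _ ≤ a^2 + b^2 := le_add_self
  · calc a * b ≤ a * a := mul_le_mul_right h a
    _ = a ^ 2 := (sq a).symm
    _ ≤ a^2 + b^2 := le_self_add

lemma lint_sub_sq_ne_top {f h : γ → ℂ}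
    (hf : (∫⁻ x, ((‖f x‖₊ : ℝ≥0∞))^2 ∂ν) ≠ ⊤) (hh : MemLp h 2 ν) :
    (∫⁻ x, ((‖f x - h x‖₊ : ℝ≥0∞))^2 ∂ν) ≠ ⊤ := by
  have hh' := lint_ne_top_iff.mp hh.2
  have hb : ∀ x, ((‖f x - h x‖₊ : ℝ≥0∞))^2
      ≤ 3 * ((‖f x‖₊ : ℝ≥0∞))^2 + 3 * ((‖h x‖₊ : ℝ≥0∞))^2 := by
    intro x
    have h1 : ((‖f x - h x‖₊ : ℝ≥0∞)) ≤ (‖f x‖₊ : ℝ≥0∞) + (‖h x‖₊ : ℝ≥0∞) := by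
      exact_mod_cast nnnorm_sub_le (f x) (h x)
    calc ((‖f x - h x‖₊ : ℝ≥0∞))^2 ≤ ((‖f x‖₊ : ℝ≥0∞) + (‖h x‖₊ : ℝ≥0∞))^2 :=
          pow_le_pow_left' h1 2
    _ = (‖f x‖₊ : ℝ≥0∞)^2 + 2 * ((‖f x‖₊:ℝ≥0∞) * (‖h x‖₊:ℝ≥0∞)) + (‖h x‖₊:ℝ≥0∞)^2 := by ring
    _ ≤ (‖f x‖₊ : ℝ≥0∞)^2 + 2 * ((‖f x‖₊:ℝ≥0∞)^2 + (‖h x‖₊:ℝ≥0∞)^2) + (‖h x‖₊:ℝ≥0∞)^2 := by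
          gcongr
          exact ennreal_mul_le_sq_add _ _
    _ ≤ 3 * ((‖f x‖₊ : ℝ≥0∞))^2 + 3 * ((‖h x‖₊ : ℝ≥0∞))^2 := le_of_eq (by ring)
  refine ne_top_of_le_ne_top ?_ (lintegral_mono hb)
  have h3 : (3:ℝ≥0∞) ≠ ⊤ := by simp
  have hmh : AEMeasurable (fun x => 3 * ((‖h x‖₊ : ℝ≥0∞))^2) ν :=
    (hh.1.enorm.pow_const 2).const_mul 3
  rw [lintegral_add_right' _ hmh, lintegral_const_mul' 3 _ h3,
    lintegral_const_mul' 3 _ h3]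
  exact ENNReal.add_ne_top.mpr ⟨ENNReal.mul_ne_top h3 hf, ENNReal.mul_ne_top h3 hh'⟩

lemma energy_step {ψ H : γ → ℂ} (hH : MemLp H 2 ν)
    (hψ : (∫⁻ p, ((‖ψ p‖₊ : ℝ≥0∞))^2 ∂ν) ≠ ⊤)
    (hint : Integrable (fun p => ψ p * conj (H p)) ν) :
    (∫⁻ p, ((‖ψ p‖₊ : ℝ≥0∞))^2 ∂ν).toReal - (∫⁻ p, ((‖H p‖₊ : ℝ≥0∞))^2 ∂ν).toReal
      - (∫⁻ p, ((‖ψ p - H p‖₊ : ℝ≥0∞))^2 ∂ν).toReal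
    = 2 * (∫ p, ψ p * conj (H p) ∂ν).re
      - 2 * (∫⁻ p, ((‖H p‖₊ : ℝ≥0∞))^2 ∂ν).toReal := by
  classical
  set H' := hH.1.mk H with hH'def
  have hH'm : StronglyMeasurable H' := hH.1.stronglyMeasurable_mk
  have hae : H =ᵐ[ν] H' := hH.1.ae_eq_mk
  have hH2' : MemLp H' 2 ν := hH.ae_eq hae
  have hS : MeasurableSet {p | H' p ≠ 0} := by
    have := (hH'm.measurable (measurableSet_singleton (0:ℂ))).compl
    simpa [Set.preimage, Set.compl_setOf] using this
  set S : Set γ := {p | H' p ≠ 0} with hSdef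
  -- the measurable surrogate for ψ on S
  set F : γ → ℂ := fun p => ψ p * conj (H' p) with hFdef
  have hFm : AEStronglyMeasurable F ν := by
    refine hint.1.congr ?_
    filter_upwards [hae] with p hp
    simp [hFdef, hp]
  set G : γ → ℂ := fun p => (F p * H' p) / (conj (H' p) * H' p) with hGdef
  have hconjm : StronglyMeasurable (fun p => conj (H' p)) :=
    Complex.continuous_conj.comp_stronglyMeasurable hH'm
  have hGm : AEStronglyMeasurable G ν :=
    ((hFm.aemeasurable.mul hH'm.measurable.aemeasurable).div
      ((hconjm.mul hH'm).measurable.aemeasurable)).aestronglyMeasurable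
  have hGS : ∀ p ∈ S, G p = ψ p := by
    intro p hp
    have h0 : H' p ≠ 0 := hp
    have hc : conj (H' p) ≠ 0 := by simpa using h0
    show (ψ p * conj (H' p) * H' p) / (conj (H' p) * H' p) = ψ p
    rw [mul_assoc, mul_div_assoc, div_self (mul_ne_zero hc h0), mul_one]
  have hGSc : ∀ p ∉ S, H' p = 0 := fun p hp => not_not.mp hp
  -- lintegral splittings
  have hsplit : ∀ u : γ → ℝ≥0∞, ∫⁻ p, u p ∂ν
      = ∫⁻ p in S, u p ∂ν + ∫⁻ p in Sᶜ, u p ∂ν :=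
    fun u => (lintegral_add_compl u hS).symm
  -- a.e. equalities on S and Sᶜ
  have eψS : (fun p => ((‖ψ p‖₊ : ℝ≥0∞))^2) =ᵐ[ν.restrict S]
      fun p => ((‖G p‖₊ : ℝ≥0∞))^2 := by
    filter_upwards [ae_restrict_mem hS] with p hp
    rw [hGS p hp]
  have haeS : H =ᵐ[ν.restrict S] H' := ae_restrict_of_ae hae
  have haeSc : H =ᵐ[ν.restrict Sᶜ] H' := ae_restrict_of_ae hae
  have eψHS : (fun p => ((‖ψ p - H p‖₊ : ℝ≥0∞))^2) =ᵐ[ν.restrict S]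
      fun p => ((‖G p - H' p‖₊ : ℝ≥0∞))^2 := by
    filter_upwards [ae_restrict_mem hS, haeS] with p hp hp2
    rw [hGS p hp, hp2]
  have eψHSc : (fun p => ((‖ψ p - H p‖₊ : ℝ≥0∞))^2) =ᵐ[ν.restrict Sᶜ]
      fun p => ((‖ψ p‖₊ : ℝ≥0∞))^2 := by
    filter_upwards [ae_restrict_mem hS.compl, haeSc] with p hp hp2
    rw [hp2, hGSc p hp, sub_zero]
  have eHSc : (fun p => ((‖H p‖₊ : ℝ≥0∞))^2) =ᵐ[ν.restrict Sᶜ] (fun _ => 0) := by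
    filter_upwards [ae_restrict_mem hS.compl, haeSc] with p hp hp2
    rw [hp2, hGSc p hp]
    simp
  have eHS : (fun p => ((‖H p‖₊ : ℝ≥0∞))^2) =ᵐ[ν.restrict S]
      fun p => ((‖H' p‖₊ : ℝ≥0∞))^2 := by
    filter_upwards [haeS] with p hp
    rw [hp]
  -- finiteness of restricted pieces
  have hres : ∀ (u : γ → ℝ≥0∞) (T : Set γ), ∫⁻ p in T, u p ∂ν ≤ ∫⁻ p, u p ∂ν :=
    fun u T => lintegral_mono' Measure.restrict_le_self le_rfl
  have hHfin : (∫⁻ p, ((‖H p‖₊ : ℝ≥0∞))^2 ∂ν) ≠ ⊤ := lint_ne_top_iff.mp hH.2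
  have hψHfin : (∫⁻ p, ((‖ψ p - H p‖₊ : ℝ≥0∞))^2 ∂ν) ≠ ⊤ := lint_sub_sq_ne_top hψ hH
  -- MemLp on restriction
  have hGfinS : (∫⁻ p in S, ((‖G p‖₊ : ℝ≥0∞))^2 ∂ν) ≠ ⊤ := by
    rw [← lintegral_congr_ae eψS]
    exact ne_top_of_le_ne_top hψ (hres _ S)
  have hG2 : MemLp G 2 (ν.restrict S) := memℒp_two_of hGm.restrict hGfinS
  have hH'2S : MemLp H' 2 (ν.restrict S) := hH2'.restrict S
  have hcross : Integrable (fun p => G p * conj (H' p)) (ν.restrict S) := by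
    refine (hint.restrict (s := S)).congr ?_
    filter_upwards [ae_restrict_mem hS, haeS] with p hp hp2
    rw [hGS p hp, hp2]
  -- the cross integral identity
  have hcrossint : ∫ p in S, G p * conj (H' p) ∂ν = ∫ p, ψ p * conj (H p) ∂ν := by
    have h1 : ∫ p in S, G p * conj (H' p) ∂ν = ∫ p in S, ψ p * conj (H p) ∂ν := by
      refine integral_congr_ae ?_
      filter_upwards [ae_restrict_mem hS, haeS] with p hp hp2
      rw [hGS p hp, hp2]
    have h2 : ∫ p in Sᶜ, ψ p * conj (H p) ∂ν = 0 := by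
      have : (fun p => ψ p * conj (H p)) =ᵐ[ν.restrict Sᶜ] (fun _ => (0:ℂ)) := by
        filter_upwards [ae_restrict_mem hS.compl, haeSc] with p hp hp2
        rw [hp2, hGSc p hp]
        simp
      rw [integral_congr_ae this, integral_zero]
    rw [h1, ← integral_add_compl hS hint, h2, add_zero]
  -- Hilbert expansion on S
  have hexp := hilbert_exp hG2 hH'2S hcross
  -- put the pieces together
  have hsplitψ := hsplit (fun p => ((‖ψ p‖₊ : ℝ≥0∞))^2)
  have hsplitψH := hsplit (fun p => ((‖ψ p - H p‖₊ : ℝ≥0∞))^2)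
  have hsplitH := hsplit (fun p => ((‖H p‖₊ : ℝ≥0∞))^2)
  rw [lintegral_congr_ae eψS] at hsplitψ
  rw [lintegral_congr_ae eψHS, lintegral_congr_ae eψHSc] at hsplitψH
  rw [lintegral_congr_ae eHS, lintegral_congr_ae eHSc, lintegral_zero, add_zero] at hsplitH
  -- finiteness of all pieces
  have f1 : (∫⁻ p in S, ((‖G p‖₊ : ℝ≥0∞))^2 ∂ν) ≠ ⊤ := hGfinS
  have f2 : (∫⁻ p in Sᶜ, ((‖ψ p‖₊ : ℝ≥0∞))^2 ∂ν) ≠ ⊤ :=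
    ne_top_of_le_ne_top hψ (hres _ _)
  have f3 : (∫⁻ p in S, ((‖G p - H' p‖₊ : ℝ≥0∞))^2 ∂ν) ≠ ⊤ := by
    rw [← lintegral_congr_ae eψHS]
    exact ne_top_of_le_ne_top hψHfin (hres _ _)
  rw [hsplitψ, hsplitψH, hsplitH, ENNReal.toReal_add f1 f2, ENNReal.toReal_add f3 f2,
    ← hcrossint]
  rw [hexp]
  ring

end Helpers

/-- Extraction of one profile: if `η(φ_n) > 0`, then after extraction
`φ_n = e^{-i x_n·e^{α_n t}ω} Φ⁽¹⁾ + r_n⁽¹⁾` with `‖Φ⁽¹⁾‖² ≥ η(φ_n)/2`, the modulated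
remainder converging weakly to `0`, and the energies decoupling. -/
theorem stmt16 (N : ℕ) (hN : 1 ≤ N) (α : ℕ → ℝ) (hα0 : ∀ n, 0 < α n)
    (hα : Tendsto α atTop atTop) (φn : ℕ → ℝ → Esp N → ℂ)
    (hbd : ∃ M : ℝ≥0∞, M < ⊤ ∧ ∀ n,
      eLpNorm (fun p : ℝ × sphereM N => φn n p.1 (p.2 : Esp N)) 2 (muP N) ≤ M)
    (hη : 0 < etaFn N α φn) :
    ∃ (σ : ℕ → ℕ), StrictMono σ ∧
    ∃ (Φ₁ : ℝ × sphereM N → ℂ) (x₁ : ℕ → Esp N) (r : ℕ → ℝ × sphereM N → ℂ),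
      MemLp Φ₁ 2 (muP N) ∧
      etaFn N α φn / 2 ≤ (eLpNorm Φ₁ 2 (muP N)).toReal ^ 2 ∧
      (∀ n p, r n p = φn (σ n) p.1 (p.2 : Esp N) -
        conj (modPhase N (x₁ n) (α (σ n)) p.1 p.2) * Φ₁ p) ∧
      (∀ g : ℝ × sphereM N → ℂ, MemLp g 2 (muP N) →
        Tendsto (fun n => ∫ p, modPhase N (x₁ n) (α (σ n)) p.1 p.2 * r n p *
            conj (g p) ∂(muP N)) atTop (𝓝 0)) ∧
      Tendsto (fun n =>
        (eLpNorm (fun p : ℝ × sphereM N => φn (σ n) p.1 (p.2 : Esp N)) 2 (muP N)).toReal ^ 2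
          - (eLpNorm Φ₁ 2 (muP N)).toReal ^ 2
          - (eLpNorm (r n) 2 (muP N)).toReal ^ 2) atTop (𝓝 0) := by
  classical
  have hEta : etaFn N α φn =
      sSup {c | ∃ H ∈ weakLimSet N α φn, c = (eLpNorm H 2 (muP N)).toReal ^ 2} := rfl
  have hne : {c | ∃ H ∈ weakLimSet N α φn, c = (eLpNorm H 2 (muP N)).toReal ^ 2}.Nonempty := by
    by_contra hc
    rw [Set.not_nonempty_iff_eq_empty] at hc
    rw [hEta, hc, Real.sSup_empty] at hη
    exact lt_irrefl 0 hη
  have hhalf : etaFn N α φn / 2 <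
      sSup {c | ∃ H ∈ weakLimSet N α φn, c = (eLpNorm H 2 (muP N)).toReal ^ 2} := by
    rw [← hEta]; linarith
  obtain ⟨c, hcS, hclt⟩ := exists_lt_of_lt_csSup hne hhalf
  obtain ⟨H, hHmem, rfl⟩ := hcS
  obtain ⟨hH2, x, σ, hσ, hconv⟩ := hHmem
  have hBpos : 0 < (eLpNorm H 2 (muP N)).toReal ^ 2 := lt_trans (by linarith) hclt
  -- basic facts about the modulation
  have habs : ∀ (y : Esp N) (a t : ℝ) (ω : sphereM N),
      ‖modPhase N y a t ω‖ = 1 := by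
    intro y a t ω
    rw [modPhase, Complex.norm_exp]
    generalize (inner ℝ y (Real.exp (a*t) • (ω : Esp N)) : ℝ) = v
    simp [Complex.mul_re]
  have hmodconj : ∀ (y : Esp N) (a t : ℝ) (ω : sphereM N),
      modPhase N y a t ω * conj (modPhase N y a t ω) = 1 := by
    intro y a t ω
    rw [Complex.mul_conj]
    have := habs y a t ω
    rw [Complex.normSq_eq_norm_sq, this]
    norm_num
  have hnorm1 : ∀ (y : Esp N) (a t : ℝ) (ω : sphereM N), ‖modPhase N y a t ω‖ = 1 := by
    intro y a t ω
    rw [habs]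
  refine ⟨σ, hσ, H, x, fun n p => φn (σ n) p.1 (p.2 : Esp N) -
      conj (modPhase N (x n) (α (σ n)) p.1 p.2) * H p, hH2, le_of_lt hclt,
      fun n p => rfl, ?_, ?_⟩
  · -- weak convergence of the modulated remainder to 0
    intro g hg
    have hgc : MemLp (fun p => conj (g p)) 2 (muP N) := by
      refine ⟨Complex.continuous_conj.comp_aestronglyMeasurable hg.1, ?_⟩
      have heq : eLpNorm (fun p => conj (g p)) 2 (muP N) = eLpNorm g 2 (muP N) :=
        eLpNorm_congr_norm_ae (ae_of_all _ fun p => by simp)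
      rw [heq]
      exact hg.2
    have hHg : Integrable (fun p => H p * conj (g p)) (muP N) := by
      have hpqr : (1 : ℝ≥0∞)/1 = 1/2 + 1/2 := by
        have h := ENNReal.add_halves (1:ℝ≥0∞)
        simp [ENNReal.add_halves]
        simpa [one_div] using h.symm
      have h1 : MemLp (H • fun p => conj (g p)) 1 (muP N) :=
        MemLp.smul (p := 2) (q := 2) (r := 1) hgc hH2
      exact memLp_one_iff_integrable.mp h1
    have ha : Tendsto (fun k => (∫ p, modPhase N (x k) (α (σ k)) p.1 p.2 *
        φn (σ k) p.1 (p.2 : Esp N) * conj (g p) ∂(muP N)) -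
          ∫ p, H p * conj (g p) ∂(muP N)) atTop (𝓝 0) :=
      tendsto_sub_nhds_zero_iff.mpr (hconv g hg)
    refine squeeze_zero_norm (fun k => ?_) (by simpa using ha.norm)
    have hpt : ∀ p : ℝ × sphereM N, modPhase N (x k) (α (σ k)) p.1 p.2 *
        (φn (σ k) p.1 (p.2 : Esp N) -
          conj (modPhase N (x k) (α (σ k)) p.1 p.2) * H p) * conj (g p)
        = modPhase N (x k) (α (σ k)) p.1 p.2 * φn (σ k) p.1 (p.2 : Esp N) * conj (g p)
            - H p * conj (g p) := by
      intro p
      have h1 := hmodconj (x k) (α (σ k)) p.1 p.2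
      calc modPhase N (x k) (α (σ k)) p.1 p.2 *
          (φn (σ k) p.1 (p.2 : Esp N) -
            conj (modPhase N (x k) (α (σ k)) p.1 p.2) * H p) * conj (g p)
          = modPhase N (x k) (α (σ k)) p.1 p.2 * φn (σ k) p.1 (p.2 : Esp N) * conj (g p)
            - (modPhase N (x k) (α (σ k)) p.1 p.2 *
                conj (modPhase N (x k) (α (σ k)) p.1 p.2)) * (H p * conj (g p)) := by ring
        _ = modPhase N (x k) (α (σ k)) p.1 p.2 * φn (σ k) p.1 (p.2 : Esp N) * conj (g p)
            - H p * conj (g p) := by rw [h1, one_mul]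
    rw [integral_congr_ae (ae_of_all _ hpt)]
    by_cases hI : Integrable (fun p : ℝ × sphereM N => modPhase N (x k) (α (σ k)) p.1 p.2 *
        φn (σ k) p.1 (p.2 : Esp N) * conj (g p)) (muP N)
    · rw [integral_sub hI hHg]
    · have hni : ¬ Integrable (fun p : ℝ × sphereM N =>
          modPhase N (x k) (α (σ k)) p.1 p.2 * φn (σ k) p.1 (p.2 : Esp N) * conj (g p)
            - H p * conj (g p)) (muP N) := by
        intro h
        apply hI
        refine (h.add hHg).congr (ae_of_all _ fun p => ?_)
        simp
      rw [integral_undef hni]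
      simp
  · -- energy decoupling
    obtain ⟨M, hMlt, hMb⟩ := hbd
    set ψ : ℕ → (ℝ × sphereM N) → ℂ := fun k p =>
      modPhase N (x k) (α (σ k)) p.1 p.2 * φn (σ k) p.1 (p.2 : Esp N) with hψdef
    have hnnψ : ∀ k p, (‖ψ k p‖₊ : ℝ≥0∞) = (‖φn (σ k) p.1 (p.2 : Esp N)‖₊ : ℝ≥0∞) := by
      intro k p
      have : ‖ψ k p‖ = ‖φn (σ k) p.1 (p.2 : Esp N)‖ := by
        rw [hψdef]
        simp only [norm_mul, hnorm1, one_mul]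
      exact congrArg _ (NNReal.eq this)
    have hψfin : ∀ k, (∫⁻ p, ((‖ψ k p‖₊ : ℝ≥0∞))^2 ∂(muP N)) ≠ ⊤ := by
      intro k
      have h1 : eLpNorm (fun p : ℝ × sphereM N => φn (σ k) p.1 (p.2 : Esp N)) 2 (muP N) < ⊤ :=
        lt_of_le_of_lt (hMb (σ k)) hMlt
      have h2 := lint_ne_top_iff.mp h1
      refine ne_of_eq_of_ne (lintegral_congr fun p => ?_) h2
      rw [hnnψ]
    have hHfin : (∫⁻ p, ((‖H p‖₊ : ℝ≥0∞))^2 ∂(muP N)) ≠ ⊤ := lint_ne_top_iff.mp hH2.2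
    have hA : ∀ k, (eLpNorm (fun p : ℝ × sphereM N => φn (σ k) p.1 (p.2 : Esp N))
        2 (muP N)).toReal ^ 2 = (∫⁻ p, ((‖ψ k p‖₊ : ℝ≥0∞))^2 ∂(muP N)).toReal := by
      intro k
      rw [sq_toReal_eLpNorm_two (by
        refine ne_of_eq_of_ne (lintegral_congr fun p => ?_) (hψfin k)
        rw [hnnψ])]
      exact congrArg _ (lintegral_congr fun p => by rw [hnnψ])
    have hrψ : ∀ k p, modPhase N (x k) (α (σ k)) p.1 p.2 *
        (φn (σ k) p.1 (p.2 : Esp N) - conj (modPhase N (x k) (α (σ k)) p.1 p.2) * H p)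
        = ψ k p - H p := by
      intro k p
      have h1 := hmodconj (x k) (α (σ k)) p.1 p.2
      calc modPhase N (x k) (α (σ k)) p.1 p.2 *
          (φn (σ k) p.1 (p.2 : Esp N) - conj (modPhase N (x k) (α (σ k)) p.1 p.2) * H p)
          = modPhase N (x k) (α (σ k)) p.1 p.2 * φn (σ k) p.1 (p.2 : Esp N)
            - (modPhase N (x k) (α (σ k)) p.1 p.2 *
                conj (modPhase N (x k) (α (σ k)) p.1 p.2)) * H p := by ring
        _ = ψ k p - H p := by rw [h1, one_mul, hψdef]
    have hrnorm : ∀ k p, ‖φn (σ k) p.1 (p.2 : Esp N) -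
        conj (modPhase N (x k) (α (σ k)) p.1 p.2) * H p‖ = ‖ψ k p - H p‖ := by
      intro k p
      rw [← hrψ k p, norm_mul, hnorm1, one_mul]
    have hC : ∀ k, (eLpNorm (fun p : ℝ × sphereM N => φn (σ k) p.1 (p.2 : Esp N) -
        conj (modPhase N (x k) (α (σ k)) p.1 p.2) * H p) 2 (muP N)).toReal ^ 2
        = (∫⁻ p, ((‖ψ k p - H p‖₊ : ℝ≥0∞))^2 ∂(muP N)).toReal := by
      intro k
      rw [eLpNorm_congr_norm_ae (ae_of_all _ (hrnorm k))]
      exact sq_toReal_eLpNorm_two (lint_sub_sq_ne_top (hψfin k) hH2)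
    have hB : (eLpNorm H 2 (muP N)).toReal ^ 2
        = (∫⁻ p, ((‖H p‖₊ : ℝ≥0∞))^2 ∂(muP N)).toReal := sq_toReal_eLpNorm_two hHfin
    -- the cross terms converge
    have hHH : ∫ p, H p * conj (H p) ∂(muP N)
        = (((∫⁻ p, ((‖H p‖₊ : ℝ≥0∞))^2 ∂(muP N)).toReal : ℝ) : ℂ) := by
      have hptH : ∀ p, H p * conj (H p) = ((‖H p‖^2 : ℝ) : ℂ) := by
        intro p
        rw [Complex.mul_conj, Complex.normSq_eq_norm_sq]
      have h2 : (∫ p, ((‖H p‖^2 : ℝ) : ℂ) ∂(muP N))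
          = ((∫ p, ‖H p‖^2 ∂(muP N) : ℝ) : ℂ) := integral_ofReal
      rw [integral_congr_ae (ae_of_all _ hptH), h2, integral_normsq hH2]
    have hD : Tendsto (fun k => ∫ p, ψ k p * conj (H p) ∂(muP N)) atTop
        (𝓝 (((∫⁻ p, ((‖H p‖₊ : ℝ≥0∞))^2 ∂(muP N)).toReal : ℂ))) := by
      have := hconv H hH2
      rw [hHH] at this
      exact this
    have hBRpos : 0 < (∫⁻ p, ((‖H p‖₊ : ℝ≥0∞))^2 ∂(muP N)).toReal := by
      rw [← hB]; exact hBpos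
    have hev : ∀ᶠ k in atTop, Integrable (fun p => ψ k p * conj (H p)) (muP N) := by
      have hne0 : (((∫⁻ p, ((‖H p‖₊ : ℝ≥0∞))^2 ∂(muP N)).toReal : ℝ) : ℂ) ≠ 0 := by
        exact_mod_cast hBRpos.ne'
      filter_upwards [hD.eventually_ne hne0] with k hk
      by_contra hc
      exact hk (integral_undef hc)
    have hre : Tendsto (fun k => (∫ p, ψ k p * conj (H p) ∂(muP N)).re) atTop
        (𝓝 ((∫⁻ p, ((‖H p‖₊ : ℝ≥0∞))^2 ∂(muP N)).toReal)) := by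
      have := (Complex.continuous_re.tendsto _).comp hD
      exact this
    have hlim : Tendsto (fun k => 2 * (∫ p, ψ k p * conj (H p) ∂(muP N)).re
        - 2 * (∫⁻ p, ((‖H p‖₊ : ℝ≥0∞))^2 ∂(muP N)).toReal) atTop (𝓝 0) := by
      have h2 := (hre.const_mul (2:ℝ)).sub_const
        (2 * (∫⁻ p, ((‖H p‖₊ : ℝ≥0∞))^2 ∂(muP N)).toReal)
      simpa using h2
    refine Tendsto.congr' ?_ hlim
    filter_upwards [hev] with k hk
    have hE := energy_step (ν := muP N) hH2 (hψfin k) hk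
    rw [hA k, hC k, hB]
    linarith [hE]
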